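/- Let (X,d) be a metric space, x₀ ∈ X, and (Xᵢ)_{i∈ℕ} a family of closed subsets with ⋃ᵢ Xᵢ = X, with Xᵢ ∩ Xⱼ = {x₀} for all i ≠ j, and with d(x,y) = d(x,x₀) + d(x₀,y) whenever x ∈ Xᵢ and y ∈ Xⱼ with i ≠ j. Let r > 0 and suppose that for each i the open r-ball Uᵢ = {x ∈ Xᵢ : d(x,x₀) < r} admits a strong deformation contraction of (Uᵢ, x₀). Then for every compact topological space K with basepoint k₀ and every continuous map f : K → X with f(k₀) = x₀, there exist a finite set S ⊆ ℕ and a continuous map g : K → X with g(K) ⊆ ⋃_{i∈S} Xᵢ such that f and g are homotopic relative to {k₀}. -/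

import Mathlib

open unitInterval

/-- `H` is a strong deformation contraction of the subset `S` of the metric space `A`
to the point `a₀ ∈ S`: it is continuous on `S × [0,1]`, maps `S × [0,1]` into `S`,
starts at the identity, ends at the constant map `a₀`, fixes `a₀` throughout, and does
not increase distances at any time. -/
def IsStrongDefContractionOn {A : Type*} [MetricSpace A] (S : Set A) (a₀ : A)
    (H : A × I → A) : Prop :=
  a₀ ∈ S ∧
  ContinuousOn H (S ×ˢ (Set.univ : Set I)) ∧
  (∀ x ∈ S, ∀ t : I, H (x, t) ∈ S) ∧
  (∀ x ∈ S, H (x, 0) = x) ∧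
  (∀ x ∈ S, H (x, 1) = a₀) ∧
  (∀ t : I, H (a₀, t) = a₀) ∧
  (∀ x ∈ S, ∀ y ∈ S, ∀ t : I, dist (H (x, t)) (H (y, t)) ≤ dist x y)

/-- if a metric space `X` is the metric wedge at `x₀` of closed subsets
`Xᵢ` and for some `r > 0` each open ball `Uᵢ = {x ∈ Xᵢ : d(x,x₀) < r}` admits a strong
deformation contraction to `x₀`, then every pointed map from a compact space `K` into
`X` is homotopic rel the basepoint to a map whose image lies in finitely many `Xᵢ`. -/
theorem metricWedge_compact_maps_into_finite_subwedge {X : Type*} [MetricSpace X] (x₀ : X)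
    (Xs : ℕ → Set X) (hclosed : ∀ i, IsClosed (Xs i)) (hunion : ⋃ i, Xs i = Set.univ)
    (hinter : ∀ i j, i ≠ j → Xs i ∩ Xs j = {x₀})
    (hdist : ∀ i j, i ≠ j → ∀ x ∈ Xs i, ∀ y ∈ Xs j, dist x y = dist x x₀ + dist x₀ y)
    (r : ℝ) (hr : 0 < r)
    (hU : ∀ i, ∃ H : X × I → X,
      IsStrongDefContractionOn {x ∈ Xs i | dist x x₀ < r} x₀ H)
    (K : Type*) [TopologicalSpace K] [CompactSpace K] (k₀ : K)
    (f : C(K, X)) (hf : f k₀ = x₀) :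
    ∃ (S : Finset ℕ) (g : C(K, X)),
      Set.range g ⊆ ⋃ i ∈ S, Xs i ∧ ContinuousMap.HomotopicRel f g {k₀} := by
  classical
  choose H hH using hU
  have hx₀U : ∀ i, x₀ ∈ {x ∈ Xs i | dist x x₀ < r} := fun i => (hH i).1
  have hx₀Xs : ∀ i, x₀ ∈ Xs i := fun i => (hx₀U i).1
  have huniq : ∀ {x : X} {i j : ℕ}, x ∈ Xs i → x ∈ Xs j → x ≠ x₀ → i = j := by
    intro x i j hxi hxj hx
    by_contra hij
    have hmem : x ∈ Xs i ∩ Xs j := ⟨hxi, hxj⟩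
    rw [hinter i j hij] at hmem
    exact hx hmem
  have hmem : ∀ x : X, ∃ i, x ∈ Xs i := by
    intro x
    have : x ∈ ⋃ i, Xs i := hunion.symm ▸ Set.mem_univ x
    exact Set.mem_iUnion.1 this
  set C : Set X := Set.range f with hCdef
  have hCcomp : IsCompact C := isCompact_range f.continuous
  set S₀ : Set ℕ := {i | ∃ x, x ∈ C ∧ x ∈ Xs i ∧ r ≤ dist x x₀} with hS₀def
  have hS₀fin : S₀.Finite := by
    have hXne : Nonempty X := ⟨x₀⟩
    obtain ⟨t, htfin, htcov⟩ := (Metric.totallyBounded_iff.1 hCcomp.totallyBounded) r hr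
    have hwit : ∀ i, i ∈ S₀ → ∃ x, x ∈ C ∧ x ∈ Xs i ∧ r ≤ dist x x₀ := fun i hi => hi
    choose! w hwC hwX hwr using hwit
    have hball : ∀ i, i ∈ S₀ → ∃ y ∈ t, w i ∈ Metric.ball y r := by
      intro i hi
      simpa using Set.mem_iUnion₂.1 (htcov (hwC i hi))
    choose! c hct hcball using hball
    have hinj : Set.InjOn c S₀ := by
      intro i hi j hj hij
      by_contra hne
      have h2r : 2 * r ≤ dist (w i) (w j) := by
        rw [hdist i j hne (w i) (hwX i hi) (w j) (hwX j hj)]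
        have h1 := hwr i hi
        have h2 := hwr j hj
        have : dist x₀ (w j) = dist (w j) x₀ := dist_comm _ _
        linarith
      have hlt : dist (w i) (w j) < 2 * r := by
        have h1 := Metric.mem_ball.1 (hcball i hi)
        have h2 := Metric.mem_ball.1 (hcball j hj)
        rw [hij] at h1
        have := dist_triangle (w i) (c j) (w j)
        have h3 : dist (c j) (w j) = dist (w j) (c j) := dist_comm _ _
        linarith
      linarith
    exact Set.Finite.of_finite_image
      (htfin.subset (by rintro y ⟨i, hi, rfl⟩; exact hct i hi)) hinj
  set Sfin : Finset ℕ := insert 0 hS₀fin.toFinset with hSdef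
  set Φ : X × I → X :=
    fun p => if h : ∃ i, i ∉ S₀ ∧ p.1 ∈ Xs i ∧ p.1 ≠ x₀ then H h.choose p else p.1 with hΦdef
  have hΦx₀ : ∀ t : I, Φ (x₀, t) = x₀ := by
    intro t
    rw [hΦdef]
    simp only
    rw [dif_neg]
    rintro ⟨i, -, -, h⟩
    exact h rfl
  have hΦH : ∀ (i : ℕ), i ∉ S₀ → ∀ x ∈ Xs i, x ≠ x₀ → ∀ t : I, Φ (x, t) = H i (x, t) := by
    intro i hi x hx hxne t
    have hcond : ∃ j, j ∉ S₀ ∧ ((x, t) : X × I).1 ∈ Xs j ∧ ((x, t) : X × I).1 ≠ x₀ :=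
      ⟨i, hi, hx, hxne⟩
    rw [hΦdef]
    simp only
    rw [dif_pos hcond]
    have hch := hcond.choose_spec
    rw [huniq hch.2.1 hx hxne]
  have hΦid : ∀ x : X, (∀ j, x ∈ Xs j → j ∈ S₀) → ∀ t : I, Φ (x, t) = x := by
    intro x hx t
    rw [hΦdef]
    simp only
    rw [dif_neg]
    rintro ⟨j, hj, hxj, -⟩
    exact hj (hx j hxj)
  have hnotS : ∀ i, i ∉ S₀ → ∀ x, x ∈ C → x ∈ Xs i → x ∈ {x ∈ Xs i | dist x x₀ < r} := by
    intro i hi x hxC hxX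
    refine ⟨hxX, ?_⟩
    by_contra h
    push_neg at h
    exact hi ⟨x, hxC, hxX, h⟩
  have hΦbound : ∀ (y : X), y ∈ C → dist y x₀ < r → ∀ s : I,
      dist (Φ (y, s)) x₀ ≤ dist y x₀ := by
    intro y hyC hyr s
    by_cases hy : y = x₀
    · rw [hy, hΦx₀ s]
    obtain ⟨i, hi⟩ := hmem y
    by_cases hiS : i ∈ S₀
    · rw [hΦid y (fun j hj => by rw [huniq hj hi hy]; exact hiS) s]
    · rw [hΦH i hiS y hi hy s]
      have hyU : y ∈ {x ∈ Xs i | dist x x₀ < r} := ⟨hi, hyr⟩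
      calc dist (H i (y, s)) x₀ = dist (H i (y, s)) (H i (x₀, s)) := by
            rw [(hH i).2.2.2.2.2.1 s]
        _ ≤ dist y x₀ := (hH i).2.2.2.2.2.2 y hyU x₀ (hx₀U i) s
  have hΦcont : ContinuousOn Φ (C ×ˢ (Set.univ : Set I)) := by
    rintro ⟨x, t⟩ ⟨hxC, -⟩
    by_cases hx : x = x₀
    · rw [hx]
      have hfst : Filter.Tendsto (fun p : X × I => p.1)
          (nhdsWithin (x₀, t) (C ×ˢ (Set.univ : Set I))) (nhds x₀) :=
        (continuous_fst.tendsto (x₀, t)).mono_left nhdsWithin_le_nhds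
      have hd : Filter.Tendsto (fun p : X × I => dist p.1 x₀)
          (nhdsWithin (x₀, t) (C ×ˢ (Set.univ : Set I))) (nhds 0) := by
        simpa using hfst.dist (tendsto_const_nhds (x := x₀))
      have key : ∀ᶠ p : X × I in nhdsWithin (x₀, t) (C ×ˢ (Set.univ : Set I)),
          dist (Φ p) x₀ ≤ dist p.1 x₀ := by
        have h1 : ∀ᶠ p : X × I in nhdsWithin (x₀, t) (C ×ˢ (Set.univ : Set I)),
            dist p.1 x₀ < r := hd.eventually_lt_const hr
        filter_upwards [h1, self_mem_nhdsWithin] with p hp hpC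
        exact hΦbound p.1 hpC.1 hp p.2
      have htend : Filter.Tendsto Φ
          (nhdsWithin (x₀, t) (C ×ˢ (Set.univ : Set I))) (nhds x₀) := by
        rw [tendsto_iff_dist_tendsto_zero]
        exact squeeze_zero' (Filter.Eventually.of_forall fun p => dist_nonneg) key hd
      show Filter.Tendsto Φ _ (nhds (Φ (x₀, t)))
      rw [hΦx₀ t]
      exact htend
    · obtain ⟨i, hi⟩ := hmem x
      have hδ : 0 < dist x x₀ := dist_pos.2 hx
      have hlocal : ∀ y, y ∈ C → dist y x < dist x x₀ → y ∈ Xs i ∧ y ≠ x₀ := by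
        intro y hyC hyx
        have hyne : y ≠ x₀ := by
          rintro rfl
          rw [dist_comm] at hyx
          exact lt_irrefl _ hyx
        obtain ⟨j, hj⟩ := hmem y
        have hji : j = i := by
          by_contra hji
          have heq := hdist j i hji y hj x hi
          have h1 : dist x₀ x = dist x x₀ := dist_comm _ _
          have h2 : 0 ≤ dist y x₀ := dist_nonneg
          linarith
        exact ⟨hji ▸ hj, hyne⟩
      by_cases hiS : i ∈ S₀
      · have hev : Φ =ᶠ[nhdsWithin (x, t) (C ×ˢ (Set.univ : Set I))] (fun p => p.1) := by
          have hball : (Metric.ball x (dist x x₀)) ×ˢ (Set.univ : Set I) ∈ nhds (x, t) :=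
            prod_mem_nhds (Metric.ball_mem_nhds x hδ) Filter.univ_mem
          filter_upwards [mem_nhdsWithin_of_mem_nhds hball, self_mem_nhdsWithin] with p hp hpC
          obtain ⟨hpX, hpne⟩ := hlocal p.1 hpC.1 (Metric.mem_ball.1 hp.1)
          exact hΦid p.1 (fun j hj => by rw [huniq hj hpX hpne]; exact hiS) p.2
        have hx_eq : Φ (x, t) = x :=
          hΦid x (fun j hj => by rw [huniq hj hi hx]; exact hiS) t
        exact (continuous_fst.continuousWithinAt).congr_of_eventuallyEq hev hx_eq
      · have hxr : dist x x₀ < r := (hnotS i hiS x hxC hi).2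
        set δ := min (dist x x₀) (r - dist x x₀) with hδ'
        have hδpos : 0 < δ := lt_min hδ (by linarith)
        have hHc : ContinuousWithinAt (H i)
            (({x ∈ Xs i | dist x x₀ < r}) ×ˢ (Set.univ : Set I)) (x, t) :=
          (hH i).2.1 (x, t) ⟨⟨hi, hxr⟩, trivial⟩
        have hVn : (Metric.ball x δ) ×ˢ (Set.univ : Set I) ∈ nhds (x, t) :=
          prod_mem_nhds (Metric.ball_mem_nhds x hδpos) Filter.univ_mem
        have hsub : (C ×ˢ (Set.univ : Set I)) ∩ ((Metric.ball x δ) ×ˢ (Set.univ : Set I)) ⊆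
            ({x ∈ Xs i | dist x x₀ < r}) ×ˢ (Set.univ : Set I) := by
          rintro ⟨y, s⟩ ⟨⟨hyC, -⟩, hyb, -⟩
          have hyx : dist y x < δ := Metric.mem_ball.1 hyb
          have h1 := hlocal y hyC (lt_of_lt_of_le hyx (min_le_left _ _))
          refine ⟨⟨h1.1, ?_⟩, trivial⟩
          have htri : dist y x₀ ≤ dist y x + dist x x₀ := dist_triangle _ _ _
          have hyx2 : dist y x < r - dist x x₀ := lt_of_lt_of_le hyx (min_le_right _ _)
          linarith
        have heq : ∀ p ∈ (C ×ˢ (Set.univ : Set I)) ∩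
            ((Metric.ball x δ) ×ˢ (Set.univ : Set I)), Φ p = H i p := by
          rintro ⟨y, s⟩ ⟨⟨hyC, -⟩, hyb, -⟩
          have h1 := hlocal y hyC (lt_of_lt_of_le (Metric.mem_ball.1 hyb) (min_le_left _ _))
          exact hΦH i hiS y h1.1 h1.2 s
        refine (continuousWithinAt_inter hVn).1 ?_
        exact ContinuousWithinAt.congr (hHc.mono hsub) heq (hΦH i hiS x hi hx t)
  have hrangef : ∀ k, f k ∈ C := fun k => Set.mem_range_self k
  have hcomp : Continuous fun p : I × K => Φ (f p.2, p.1) := by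
    apply hΦcont.comp_continuous
    · exact ((f.continuous.comp continuous_snd).prodMk continuous_fst)
    · intro p
      exact ⟨hrangef p.2, trivial⟩
  have hgcont : Continuous fun k => Φ (f k, 1) := by
    apply hΦcont.comp_continuous
    · exact (f.continuous.prodMk continuous_const)
    · intro k
      exact ⟨hrangef k, trivial⟩
  have hΦone : ∀ k, Φ (f k, 1) ∈ ⋃ i ∈ Sfin, Xs i := by
    intro k
    have hx0mem : x₀ ∈ ⋃ i ∈ Sfin, Xs i :=
      Set.mem_biUnion (Finset.mem_insert_self 0 _) (hx₀Xs 0)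
    by_cases hy : f k = x₀
    · rw [hy, hΦx₀]
      exact hx0mem
    · obtain ⟨i, hi⟩ := hmem (f k)
      by_cases hiS : i ∈ S₀
      · rw [hΦid (f k) (fun j hj => by rw [huniq hj hi hy]; exact hiS) 1]
        exact Set.mem_biUnion
          (Finset.mem_insert_of_mem (hS₀fin.mem_toFinset.2 hiS)) hi
      · rw [hΦH i hiS (f k) hi hy 1,
          (hH i).2.2.2.2.1 (f k) (hnotS i hiS (f k) (hrangef k) hi)]
        exact hx0mem
  have hΦzero : ∀ k, Φ (f k, 0) = f k := by
    intro k
    by_cases hy : f k = x₀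
    · rw [hy, hΦx₀]
    · obtain ⟨i, hi⟩ := hmem (f k)
      by_cases hiS : i ∈ S₀
      · exact hΦid (f k) (fun j hj => by rw [huniq hj hi hy]; exact hiS) 0
      · rw [hΦH i hiS (f k) hi hy 0]
        exact (hH i).2.2.2.1 (f k) (hnotS i hiS (f k) (hrangef k) hi)
  refine ⟨Sfin, ⟨fun k => Φ (f k, 1), hgcont⟩, ?_, ?_⟩
  · rintro y ⟨k, rfl⟩
    exact hΦone k
  · refine ⟨⟨⟨⟨fun p => Φ (f p.2, p.1), hcomp⟩, ?_, ?_⟩, ?_⟩⟩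
    · intro k
      exact hΦzero k
    · intro k
      rfl
    · intro s k hk
      have hk' : k = k₀ := hk
      subst hk'
      show Φ (f k, s) = f k
      rw [hf, hΦx₀]
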